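/- Let p, q be positive integers, n = p + q, and let u be a descending shuffle and v an ascending shuffle in S_n with u ≥ v in the Bruhat order. Then the number of openers of the pair (u,v) equals the number of closers, and the canonical matching M(u,v) is a perfect matching between the openers and the closers: every opener occurs as the first coordinate of exactly one pair of M(u,v), and every closer occurs as the second coordinate of exactly one pair. -/

import Mathlib

/-- The rank function `r_w(i,j) = #{k ≤ i : w(k) ≤ j}` (positions and values 1-indexed). -/
def rk {n : ℕ} (w : Equiv.Perm (Fin n)) (i j : ℕ) : ℕ :=
  (Finset.univ.filter (fun k : Fin n => (k : ℕ) + 1 ≤ i ∧ (w k : ℕ) + 1 ≤ j)).card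

/-- The Bruhat order: `u ≤ v` iff `r_u(i,j) ≥ r_v(i,j)` for all `i, j`. -/
def BruhatLE {n : ℕ} (u v : Equiv.Perm (Fin n)) : Prop :=
  ∀ i j : ℕ, rk v i j ≤ rk u i j

/-- `u` is a descending shuffle of `p,…,1` and `n,…,p+1`. -/
def DescShuffle (p : ℕ) {n : ℕ} (u : Equiv.Perm (Fin n)) : Prop :=
  ∀ i j : Fin n, i < j →
    ((u i : ℕ) + 1 ≤ p ∧ (u j : ℕ) + 1 ≤ p → u j < u i) ∧
    (p < (u i : ℕ) + 1 ∧ p < (u j : ℕ) + 1 → u j < u i)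

/-- `v` is an ascending shuffle of `1,…,p` and `p+1,…,n`. -/
def AscShuffle (p : ℕ) {n : ℕ} (v : Equiv.Perm (Fin n)) : Prop :=
  ∀ i j : Fin n, i < j →
    ((v i : ℕ) + 1 ≤ p ∧ (v j : ℕ) + 1 ≤ p → v i < v j) ∧
    (p < (v i : ℕ) + 1 ∧ p < (v j : ℕ) + 1 → v i < v j)

/-- Position `i` is an opener for the pair `(u,v)`: `u(i) > p` and `v(i) ≤ p`. -/
def IsOpener (p : ℕ) {n : ℕ} (u v : Equiv.Perm (Fin n)) (i : Fin n) : Prop :=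
  p < (u i : ℕ) + 1 ∧ (v i : ℕ) + 1 ≤ p

/-- Position `j` is a closer for the pair `(u,v)`: `u(j) ≤ p` and `v(j) > p`. -/
def IsCloser (p : ℕ) {n : ℕ} (u v : Equiv.Perm (Fin n)) (j : Fin n) : Prop :=
  (u j : ℕ) + 1 ≤ p ∧ p < (v j : ℕ) + 1

/-- One step of the left-to-right scan constructing the canonical matching.  The state is a
pair (stack of not-yet-matched openers, most recent on top; list of matched pairs so far).
At an opener we push it onto the stack; at a closer we match it with the top of the stack,
which is the largest unmatched opener to its left. -/
def cmStep (p : ℕ) {n : ℕ} (u v : Equiv.Perm (Fin n))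
    (st : List (Fin n) × List (Fin n × Fin n)) (k : Fin n) :
    List (Fin n) × List (Fin n × Fin n) :=
  if p < (u k : ℕ) + 1 ∧ (v k : ℕ) + 1 ≤ p then
    (k :: st.1, st.2)
  else if (u k : ℕ) + 1 ≤ p ∧ p < (v k : ℕ) + 1 then
    match st.1 with
    | [] => st
    | i :: s => (s, (i, k) :: st.2)
  else st

/-- The canonical matching `M(u,v)`, obtained by scanning positions from left to right and
matching each closer `j` with the largest opener `i < j` not already matched to an earlier
closer. -/
def canonicalMatching (p : ℕ) {n : ℕ} (u v : Equiv.Perm (Fin n)) : List (Fin n × Fin n) :=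
  ((List.finRange n).foldl (cmStep p u v) ([], [])).2

instance (p : ℕ) {n : ℕ} (u v : Equiv.Perm (Fin n)) (i : Fin n) :
    Decidable (IsOpener p u v i) :=
  inferInstanceAs (Decidable (p < (u i : ℕ) + 1 ∧ (v i : ℕ) + 1 ≤ p))

instance (p : ℕ) {n : ℕ} (u v : Equiv.Perm (Fin n)) (j : Fin n) :
    Decidable (IsCloser p u v j) :=
  inferInstanceAs (Decidable ((u j : ℕ) + 1 ≤ p ∧ p < (v j : ℕ) + 1))

section MyAux

variable {n : ℕ} (p : ℕ) (u v : Equiv.Perm (Fin n))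

lemma my_not_opener_of_closer {k : Fin n} (h : IsCloser p u v k) : ¬ IsOpener p u v k := by
  intro ho; exact absurd h.1 (not_le.mpr ho.1)

lemma my_cmStep_opener (st : List (Fin n) × List (Fin n × Fin n)) {k : Fin n}
    (h : IsOpener p u v k) : cmStep p u v st k = (k :: st.1, st.2) := by
  unfold cmStep
  rw [if_pos (show p < (u k : ℕ) + 1 ∧ (v k : ℕ) + 1 ≤ p from h)]

lemma my_cmStep_closer (st : List (Fin n) × List (Fin n × Fin n)) {k : Fin n} {i : Fin n}
    {s : List (Fin n)} (h : IsCloser p u v k) (hs : st.1 = i :: s) :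
    cmStep p u v st k = (s, (i, k) :: st.2) := by
  obtain ⟨s1, s2⟩ := st
  simp only at hs
  subst hs
  have hno : ¬ (p < (u k : ℕ) + 1 ∧ (v k : ℕ) + 1 ≤ p) :=
    my_not_opener_of_closer p u v h
  unfold cmStep
  rw [if_neg hno, if_pos (show (u k : ℕ) + 1 ≤ p ∧ p < (v k : ℕ) + 1 from h)]

lemma my_cmStep_neither (st : List (Fin n) × List (Fin n × Fin n)) {k : Fin n}
    (h1 : ¬ IsOpener p u v k) (h2 : ¬ IsCloser p u v k) : cmStep p u v st k = st := by
  obtain ⟨s1, s2⟩ := st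
  unfold cmStep
  rw [if_neg (show ¬ (p < (u k : ℕ) + 1 ∧ (v k : ℕ) + 1 ≤ p) from h1),
    if_neg (show ¬ ((u k : ℕ) + 1 ≤ p ∧ p < (v k : ℕ) + 1) from h2)]

/-- Main invariant of the scan. -/
lemma my_cm_inv (L : List (Fin n))
    (hbal : ∀ P : List (Fin n), P <+: L →
      (P.filter fun k => decide (IsCloser p u v k)).length ≤
        (P.filter fun k => decide (IsOpener p u v k)).length) :
    ((L.foldl (cmStep p u v) ([], [])).1 ++
        (L.foldl (cmStep p u v) ([], [])).2.map Prod.fst).Perm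
      (L.filter fun k => decide (IsOpener p u v k)) ∧
    ((L.foldl (cmStep p u v) ([], [])).2.map Prod.snd).Perm
      (L.filter fun k => decide (IsCloser p u v k)) := by
  induction L using List.reverseRecOn with
  | nil => simp
  | append_singleton L k ih =>
    have hbL : ∀ P : List (Fin n), P <+: L →
        (P.filter fun k => decide (IsCloser p u v k)).length ≤
          (P.filter fun k => decide (IsOpener p u v k)).length :=
      fun P hP => hbal P (hP.trans (L.prefix_append [k]))
    obtain ⟨h1, h2⟩ := ih hbL
    rw [List.foldl_append, List.foldl_cons, List.foldl_nil]
    set st := L.foldl (cmStep p u v) ([], []) with hst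
    by_cases ho : IsOpener p u v k
    · have hnc : ¬ IsCloser p u v k := fun hc => my_not_opener_of_closer p u v hc ho
      rw [my_cmStep_opener p u v st ho, List.filter_append, List.filter_append,
        List.filter_cons_of_pos (by simpa using ho),
        List.filter_cons_of_neg (by simpa using hnc)]
      simp only [List.filter_nil, List.append_nil]
      refine ⟨?_, h2⟩
      exact (h1.cons k).trans (List.perm_append_singleton k _).symm
    · by_cases hc : IsCloser p u v k
      · have hfull := hbal (L ++ [k]) (List.prefix_refl _)
        rw [List.filter_append, List.filter_append,
          List.filter_cons_of_pos (by simpa using hc),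
          List.filter_cons_of_neg (by simpa using ho)] at hfull
        simp only [List.filter_nil, List.append_nil, List.length_append] at hfull
        simp only [List.length_cons, List.length_nil] at hfull
        have hl1 := h1.length_eq
        have hl2 := h2.length_eq
        rw [List.length_append, List.length_map] at hl1
        rw [List.length_map] at hl2
        cases hs : st.1 with
        | nil =>
          exfalso
          rw [hs] at hl1
          simp only [List.length_nil, Nat.zero_add] at hl1
          omega
        | cons i s =>
          rw [my_cmStep_closer p u v st hc hs, List.filter_append, List.filter_append,
            List.filter_cons_of_neg (by simpa using ho),
            List.filter_cons_of_pos (by simpa using hc)]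
          simp only [List.filter_nil, List.append_nil]
          rw [hs] at h1
          constructor
          · exact List.perm_middle.trans h1
          · exact (h2.cons k).trans (List.perm_append_singleton k _).symm
      · rw [my_cmStep_neither p u v st ho hc, List.filter_append, List.filter_append,
          List.filter_cons_of_neg (by simpa using ho),
          List.filter_cons_of_neg (by simpa using hc)]
        simp only [List.filter_nil, List.append_nil]
        exact ⟨h1, h2⟩

lemma my_mem_take_finRange (t : ℕ) (k : Fin n) :
    k ∈ (List.finRange n).take t ↔ (k : ℕ) < t := by
  rw [List.mem_take_iff_getElem]
  constructor
  · rintro ⟨i, hi, rfl⟩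
    have : ((List.finRange n)[i]'(lt_of_lt_of_le hi (min_le_right _ _)) : ℕ) = i := by
      rw [List.getElem_finRange]; rfl
    rw [this]
    exact lt_of_lt_of_le hi (min_le_left _ _)
  · intro hk
    refine ⟨(k : ℕ), lt_min hk (by simpa using k.isLt), ?_⟩
    rw [List.getElem_finRange]
    apply Fin.ext
    rfl

lemma my_length_filter_take (t : ℕ) (P : Fin n → Prop) [DecidablePred P] :
    (((List.finRange n).take t).filter fun k => decide (P k)).length =
      (Finset.univ.filter fun k : Fin n => (k : ℕ) + 1 ≤ t ∧ P k).card := by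
  have hnd : (((List.finRange n).take t).filter fun k => decide (P k)).Nodup :=
    (List.filter_sublist.trans (List.take_sublist _ _)).nodup (List.nodup_finRange n)
  rw [← List.toFinset_card_of_nodup hnd]
  congr 1
  ext k
  simp only [List.mem_toFinset, List.mem_filter, my_mem_take_finRange,
    decide_eq_true_eq, Finset.mem_filter, Finset.mem_univ, true_and]
  constructor
  · rintro ⟨h, hp⟩; exact ⟨by omega, hp⟩
  · rintro ⟨h, hp⟩; exact ⟨by omega, hp⟩

lemma my_length_filter_finRange (P : Fin n → Prop) [DecidablePred P] :
    ((List.finRange n).filter fun k => decide (P k)).length =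
      (Finset.univ.filter fun k : Fin n => P k).card := by
  have hnd : ((List.finRange n).filter fun k => decide (P k)).Nodup :=
    List.filter_sublist.nodup (List.nodup_finRange n)
  rw [← List.toFinset_card_of_nodup hnd]
  congr 1
  ext k
  simp

lemma my_closers_le_openers (huv : BruhatLE v u) (t : ℕ) :
    (Finset.univ.filter fun k : Fin n => (k : ℕ) + 1 ≤ t ∧ IsCloser p u v k).card ≤
      (Finset.univ.filter fun k : Fin n => (k : ℕ) + 1 ≤ t ∧ IsOpener p u v k).card := by
  have hb := huv t p
  unfold rk at hb
  have hu := Finset.card_filter_add_card_filter_not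
    (s := Finset.univ.filter fun k : Fin n => (k : ℕ) + 1 ≤ t ∧ (u k : ℕ) + 1 ≤ p)
    (p := fun k : Fin n => p < (v k : ℕ) + 1)
  have hv := Finset.card_filter_add_card_filter_not
    (s := Finset.univ.filter fun k : Fin n => (k : ℕ) + 1 ≤ t ∧ (v k : ℕ) + 1 ≤ p)
    (p := fun k : Fin n => p < (u k : ℕ) + 1)
  rw [Finset.filter_filter, Finset.filter_filter] at hu hv
  have e1 : (Finset.univ.filter fun k : Fin n =>
      ((k : ℕ) + 1 ≤ t ∧ (u k : ℕ) + 1 ≤ p) ∧ p < (v k : ℕ) + 1) =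
      (Finset.univ.filter fun k : Fin n => (k : ℕ) + 1 ≤ t ∧ IsCloser p u v k) := by
    ext k; simp [IsCloser]; tauto
  have e2 : (Finset.univ.filter fun k : Fin n =>
      ((k : ℕ) + 1 ≤ t ∧ (v k : ℕ) + 1 ≤ p) ∧ p < (u k : ℕ) + 1) =
      (Finset.univ.filter fun k : Fin n => (k : ℕ) + 1 ≤ t ∧ IsOpener p u v k) := by
    ext k; simp [IsOpener]; tauto
  have e3 : (Finset.univ.filter fun k : Fin n =>
      ((k : ℕ) + 1 ≤ t ∧ (u k : ℕ) + 1 ≤ p) ∧ ¬ p < (v k : ℕ) + 1) =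
      (Finset.univ.filter fun k : Fin n =>
      ((k : ℕ) + 1 ≤ t ∧ (v k : ℕ) + 1 ≤ p) ∧ ¬ p < (u k : ℕ) + 1) := by
    ext k; simp only [Finset.mem_filter, Finset.mem_univ, true_and]; omega
  rw [e1, e3] at hu
  rw [e2] at hv
  omega

lemma my_bal (huv : BruhatLE v u) :
    ∀ P : List (Fin n), P <+: List.finRange n →
      (P.filter fun k => decide (IsCloser p u v k)).length ≤
        (P.filter fun k => decide (IsOpener p u v k)).length := by
  intro P hP
  obtain ⟨t, rfl⟩ : ∃ t, P = (List.finRange n).take t :=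
    ⟨P.length, List.prefix_iff_eq_take.mp hP⟩
  rw [my_length_filter_take, my_length_filter_take]
  exact my_closers_le_openers p u v huv t

lemma my_count_eq :
    (Finset.univ.filter fun k : Fin n => IsOpener p u v k).card =
      (Finset.univ.filter fun k : Fin n => IsCloser p u v k).card := by
  have hcu : (Finset.univ.filter fun k : Fin n => (u k : ℕ) + 1 ≤ p).card =
      (Finset.univ.filter fun j : Fin n => (j : ℕ) + 1 ≤ p).card :=
    Finset.card_equiv u (by intro i; simp)
  have hcv : (Finset.univ.filter fun k : Fin n => (v k : ℕ) + 1 ≤ p).card =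
      (Finset.univ.filter fun j : Fin n => (j : ℕ) + 1 ≤ p).card :=
    Finset.card_equiv v (by intro i; simp)
  have hu := Finset.card_filter_add_card_filter_not
    (s := Finset.univ.filter fun k : Fin n => (u k : ℕ) + 1 ≤ p)
    (p := fun k : Fin n => p < (v k : ℕ) + 1)
  have hv := Finset.card_filter_add_card_filter_not
    (s := Finset.univ.filter fun k : Fin n => (v k : ℕ) + 1 ≤ p)
    (p := fun k : Fin n => p < (u k : ℕ) + 1)
  rw [Finset.filter_filter, Finset.filter_filter] at hu hv
  have e1 : (Finset.univ.filter fun k : Fin n =>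
      (u k : ℕ) + 1 ≤ p ∧ p < (v k : ℕ) + 1) =
      (Finset.univ.filter fun k : Fin n => IsCloser p u v k) := by
    ext k; simp [IsCloser]
  have e2 : (Finset.univ.filter fun k : Fin n =>
      (v k : ℕ) + 1 ≤ p ∧ p < (u k : ℕ) + 1) =
      (Finset.univ.filter fun k : Fin n => IsOpener p u v k) := by
    ext k; simp [IsOpener]; tauto
  have e3 : (Finset.univ.filter fun k : Fin n =>
      ((u k : ℕ) + 1 ≤ p) ∧ ¬ p < (v k : ℕ) + 1) =
      (Finset.univ.filter fun k : Fin n =>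
      ((v k : ℕ) + 1 ≤ p) ∧ ¬ p < (u k : ℕ) + 1) := by
    ext k; simp only [Finset.mem_filter, Finset.mem_univ, true_and]; omega
  rw [e1, e3] at hu
  rw [e2] at hv
  omega

end MyAux

theorem stmt10 (p q n : ℕ) (hp : 0 < p) (hq : 0 < q) (hn : n = p + q)
    (u v : Equiv.Perm (Fin n)) (hu : DescShuffle p u) (hv : AscShuffle p v)
    (huv : BruhatLE v u) :
    (Finset.univ.filter (fun i : Fin n => IsOpener p u v i)).card =
      (Finset.univ.filter (fun j : Fin n => IsCloser p u v j)).card ∧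
    (∀ i : Fin n, IsOpener p u v i →
      ∃! pr : Fin n × Fin n, pr ∈ canonicalMatching p u v ∧ pr.1 = i) ∧
    (∀ j : Fin n, IsCloser p u v j →
      ∃! pr : Fin n × Fin n, pr ∈ canonicalMatching p u v ∧ pr.2 = j) := by
  classical
  have hcount := my_count_eq p u v
  obtain ⟨h1, h2⟩ := my_cm_inv p u v (List.finRange n) (my_bal p u v huv)
  set st := (List.finRange n).foldl (cmStep p u v) ([], []) with hst
  have hm : canonicalMatching p u v = st.2 := rfl
  have hOlen := my_length_filter_finRange (fun k : Fin n => IsOpener p u v k)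
  have hClen := my_length_filter_finRange (fun k : Fin n => IsCloser p u v k)
  have hl1 := h1.length_eq
  have hl2 := h2.length_eq
  rw [List.length_append, List.length_map, hOlen] at hl1
  rw [List.length_map, hClen] at hl2
  have hs1 : st.1 = [] := List.eq_nil_of_length_eq_zero (by omega)
  rw [hs1, List.nil_append] at h1
  have hndO : (st.2.map Prod.fst).Nodup :=
    h1.nodup_iff.mpr (List.filter_sublist.nodup (List.nodup_finRange n))
  have hndC : (st.2.map Prod.snd).Nodup :=
    h2.nodup_iff.mpr (List.filter_sublist.nodup (List.nodup_finRange n))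
  refine ⟨hcount, ?_, ?_⟩
  · intro i hi
    have hmem : i ∈ st.2.map Prod.fst := h1.mem_iff.mpr (by
      simp [List.mem_filter, hi, List.mem_finRange])
    obtain ⟨pr, hpr, hpr1⟩ := List.mem_map.mp hmem
    refine ⟨pr, ⟨by rw [hm]; exact hpr, hpr1⟩, ?_⟩
    rintro pr' ⟨hpr', h1'⟩
    rw [hm] at hpr'
    exact List.inj_on_of_nodup_map hndO hpr' hpr (by rw [h1', hpr1])
  · intro j hj
    have hmem : j ∈ st.2.map Prod.snd := h2.mem_iff.mpr (by
      simp [List.mem_filter, hj, List.mem_finRange])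
    obtain ⟨pr, hpr, hpr1⟩ := List.mem_map.mp hmem
    refine ⟨pr, ⟨by rw [hm]; exact hpr, hpr1⟩, ?_⟩
    rintro pr' ⟨hpr', h1'⟩
    rw [hm] at hpr'
    exact List.inj_on_of_nodup_map hndC hpr' hpr (by rw [h1', hpr1])
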